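/- If Σ̃ is a tree-like multi-sorted signature with only unary function symbols and no constant symbols, then the class of finite Σ̃-structures is a well-quasi-order with respect to the embeddability quasi-order. -/

import Mathlib

universe u

/-- A multi-sorted signature with only unary function symbols and no
constant symbols. -/
structure UnarySig where
  S : Type
  F : Type
  src : F → S
  tgt : F → S

/-- Edge relation of the sort dependency graph. -/
def UnarySig.Step (σ : UnarySig) (s s' : σ.S) : Prop :=
  ∃ f : σ.F, σ.src f = s ∧ σ.tgt f = s'

/-- Acyclicity of the sort dependency graph. -/
def UnarySig.Acyclic (σ : UnarySig) : Prop :=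
  ∀ s : σ.S, ¬ Relation.TransGen σ.Step s s

/-- The signature is tree-like: the sort graph is acyclic, every sort is the
domain of at most one function symbol (outdegree at most 1), and there is
exactly one sort that is the domain of no function symbol (the root). -/
def UnarySig.TreeLike (σ : UnarySig) : Prop :=
  σ.Acyclic ∧ (∀ f g : σ.F, σ.src f = σ.src g → f = g) ∧
    ∃! r : σ.S, ∀ f : σ.F, σ.src f ≠ r

/-- A `Σ̃`-structure. -/
structure UnarySig.Str (σ : UnarySig) : Type (u + 1) where
  carrier : σ.S → Type u
  fI : ∀ f : σ.F, carrier (σ.src f) → carrier (σ.tgt f)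

/-- An embedding of `Σ̃`-structures: an injective map commuting with all the
function interpretations. -/
structure UnarySig.Emb {σ : UnarySig} (M N : UnarySig.Str.{u} σ) where
  toFun : ∀ s : σ.S, M.carrier s → N.carrier s
  inj : ∀ s : σ.S, Function.Injective (toFun s)
  comm : ∀ (f : σ.F) (x : M.carrier (σ.src f)),
    toFun (σ.tgt f) (M.fI f x) = N.fI f (toFun (σ.src f) x)

namespace TWqo

open List Set

/-- mono for SublistForall₂ -/
theorem sfImp {α β : Type*} {r r' : α → β → Prop} (h : ∀ a b, r a b → r' a b) :
    ∀ {l₁ : List α} {l₂ : List β}, SublistForall₂ r l₁ l₂ → SublistForall₂ r' l₁ l₂ := by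
  intro l₁ l₂ hs
  induction hs with
  | nil => exact SublistForall₂.nil
  | cons hr _ ih => exact SublistForall₂.cons (h _ _ hr) ih
  | cons_right _ ih => exact SublistForall₂.cons_right ih

/-- finite product of pwo's is pwo -/
theorem pi_pwo {ι : Type} [Fintype ι] {α : ι → Type*} (r : ∀ i, α i → α i → Prop)
    [∀ i, IsRefl (α i) (r i)] [∀ i, IsTrans (α i) (r i)]
    (h : ∀ i, (Set.univ : Set (α i)).PartiallyWellOrderedOn (r i)) :
    (Set.univ : Set (∀ i, α i)).PartiallyWellOrderedOn fun g₁ g₂ => ∀ i, r i (g₁ i) (g₂ i) := by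
  have aux : ∀ t : Finset ι, (Set.univ : Set (∀ i, α i)).PartiallyWellOrderedOn
      fun g₁ g₂ => ∀ i ∈ t, r i (g₁ i) (g₂ i) := by
    intro t
    classical
    induction t using Finset.induction_on with
    | empty => exact Set.partiallyWellOrderedOn_iff_exists_lt.2 fun f _ => ⟨0, 1, Nat.zero_lt_one, by simp⟩
    | @insert a t ha ih =>
      rw [Set.partiallyWellOrderedOn_iff_exists_lt]
      intro f _
      haveI : IsPreorder (α a) (r a) := { refl := refl_of (r a), trans := fun _ _ _ => trans_of (r a) }
      obtain ⟨g, hg⟩ := (h a).exists_monotone_subseq (f := fun n => f n a) fun _ => Set.mem_univ _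
      obtain ⟨m, n, hmn, hr⟩ := Set.partiallyWellOrderedOn_iff_exists_lt.1 ih (fun k => f (g k)) fun _ => Set.mem_univ _
      refine ⟨g m, g n, g.strictMono hmn, fun i hi => ?_⟩
      rcases Finset.mem_insert.1 hi with rfl | hi
      · exact hg m n hmn.le
      · exact hr i hi
  rw [Set.partiallyWellOrderedOn_iff_exists_lt]
  intro f hf
  obtain ⟨m, n, hmn, hr⟩ := Set.partiallyWellOrderedOn_iff_exists_lt.1 (aux Finset.univ) f hf
  exact ⟨m, n, hmn, fun i => hr i (Finset.mem_univ i)⟩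

variable (σ : UnarySig)

/-- depth-indexed invariant trees -/
def TT : ℕ → Type
  | 0 => PUnit
  | n + 1 => σ.F → List (TT n)

def TLe : ∀ n, TT σ n → TT σ n → Prop
  | 0, _, _ => True
  | n + 1, a, b => ∀ f, List.SublistForall₂ (TLe n) (a f) (b f)

instance TLe_refl : ∀ n, IsRefl (TT σ n) (TLe σ n)
  | 0 => ⟨fun _ => trivial⟩
  | n + 1 => ⟨fun a f => haveI := TLe_refl n; refl_of (List.SublistForall₂ (TLe σ n)) (a f)⟩

instance TLe_trans : ∀ n, IsTrans (TT σ n) (TLe σ n)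
  | 0 => ⟨fun _ _ _ _ _ => trivial⟩
  | n + 1 => ⟨fun a b c hab hbc f =>
      haveI := TLe_trans n
      trans_of (List.SublistForall₂ (TLe σ n)) (hab f) (hbc f)⟩

theorem TLe_pwo [Fintype σ.F] :
    ∀ n, (Set.univ : Set (TT σ n)).PartiallyWellOrderedOn (TLe σ n)
  | 0 => Set.partiallyWellOrderedOn_iff_exists_lt.2 fun _ _ => ⟨0, 1, Nat.zero_lt_one, trivial⟩
  | n + 1 => by
    have hlist : (Set.univ : Set (List (TT σ n))).PartiallyWellOrderedOn
        (List.SublistForall₂ (TLe σ n)) := by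
      haveI : IsPreorder (TT σ n) (TLe σ n) := { refl := refl_of (TLe σ n), trans := fun _ _ _ => trans_of (TLe σ n) }
      have h := (TLe_pwo n).partiallyWellOrderedOn_sublistForall₂ (r := TLe σ n)
      rw [Set.partiallyWellOrderedOn_iff_exists_lt] at h ⊢
      intro f hf
      exact h f (by simp)
    exact pi_pwo (ι := σ.F) (α := fun _ => List (TT σ n))
      (fun _ => List.SublistForall₂ (TLe σ n)) fun _ => hlist


open scoped Classical

variable {σ}

noncomputable def elems (M : UnarySig.Str.{u} σ) (hf : ∀ s, Finite (M.carrier s)) (s : σ.S) :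
    List (M.carrier s) :=
  haveI := hf s
  haveI := Fintype.ofFinite (M.carrier s)
  Finset.univ.toList

theorem mem_elems (M : UnarySig.Str.{u} σ) (hf : ∀ s, Finite (M.carrier s)) (s : σ.S)
    (x : M.carrier s) : x ∈ elems M hf s := by
  simp [elems]

theorem nodup_elems (M : UnarySig.Str.{u} σ) (hf : ∀ s, Finite (M.carrier s)) (s : σ.S) :
    (elems M hf s).Nodup := Finset.nodup_toList _

noncomputable def pre (M : UnarySig.Str.{u} σ) (hf : ∀ s, Finite (M.carrier s)) (f : σ.F)
    (s : σ.S) (h : σ.tgt f = s) (x : M.carrier s) : List (M.carrier (σ.src f)) :=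
  (elems M hf (σ.src f)).filter fun z => decide (h ▸ M.fI f z = x)

theorem mem_pre {M : UnarySig.Str.{u} σ} {hf : ∀ s, Finite (M.carrier s)} {f : σ.F}
    {x : M.carrier (σ.tgt f)} {z : M.carrier (σ.src f)} :
    z ∈ pre M hf f (σ.tgt f) rfl x ↔ M.fI f z = x := by
  simp [pre, List.mem_filter, mem_elems]

theorem nodup_pre (M : UnarySig.Str.{u} σ) (hf : ∀ s, Finite (M.carrier s)) (f : σ.F)
    (s : σ.S) (h : σ.tgt f = s) (x : M.carrier s) : (pre M hf f s h x).Nodup :=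
  (nodup_elems M hf _).filter _

noncomputable def typ (M : UnarySig.Str.{u} σ) (hf : ∀ s, Finite (M.carrier s)) :
    ∀ (n : ℕ) (s : σ.S), M.carrier s → TT σ n
  | 0, _, _ => PUnit.unit
  | n + 1, s, x => fun f =>
      if h : σ.tgt f = s then (pre M hf f s h x).map (typ M hf n (σ.src f)) else []

noncomputable def hS (σ : UnarySig) [Fintype σ.S] (s : σ.S) : ℕ :=
  (Finset.univ.filter fun t => Relation.TransGen σ.Step t s).card

theorem hS_lt [Fintype σ.S] (hac : σ.Acyclic) {s' s : σ.S} (h : σ.Step s' s) :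
    hS σ s' < hS σ s := by
  apply Finset.card_lt_card
  rw [Finset.ssubset_iff_of_subset]
  · exact ⟨s', by simp [Relation.TransGen.single h], by simp [hac s']⟩
  · intro t ht
    simp only [Finset.mem_filter, Finset.mem_univ, true_and] at ht ⊢
    exact ht.tail h

section Pair

variable [Fintype σ.S] (M N : UnarySig.Str.{u} σ) (hfM : ∀ s, Finite (M.carrier s))
  (hfN : ∀ s, Finite (N.carrier s))

def Rel (s : σ.S) (x : M.carrier s) (y : N.carrier s) : Prop :=
  TLe σ (hS σ s + 1) (typ M hfM (hS σ s + 1) s x) (typ N hfN (hS σ s + 1) s y)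

theorem tle_down : ∀ (m : ℕ) (s : σ.S) (x : M.carrier s) (y : N.carrier s),
    TLe σ (m + 1) (typ M hfM (m + 1) s x) (typ N hfN (m + 1) s y) →
    TLe σ m (typ M hfM m s x) (typ N hfN m s y)
  | 0, _, _, _, _ => trivial
  | m + 1, s, x, y, H => by
    intro f
    have Hf := H f
    by_cases h : σ.tgt f = s
    · simp only [typ.eq_2 M hfM s x (m + 1), typ.eq_2 N hfN s y (m + 1), typ.eq_2 M hfM s x m,
        typ.eq_2 N hfN s y m, dif_pos h] at Hf ⊢
      simp only [List.sublistForall₂_map_left_iff, List.sublistForall₂_map_right_iff] at Hf ⊢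
      exact sfImp (fun a b hab => tle_down m (σ.src f) a b hab) Hf
    · simp only [typ, dif_neg h]
      exact List.SublistForall₂.nil

theorem tle_down_add : ∀ (d k : ℕ) (s : σ.S) (x : M.carrier s) (y : N.carrier s),
    TLe σ (k + d) (typ M hfM (k + d) s x) (typ N hfN (k + d) s y) →
    TLe σ k (typ M hfM k s x) (typ N hfN k s y)
  | 0, _, _, _, _, H => H
  | d + 1, k, s, x, y, H =>
      tle_down_add d k s x y (tle_down M N hfM hfN (k + d) s x y H)

theorem tle_down_le {k m : ℕ} (hkm : k ≤ m) (s : σ.S) (x : M.carrier s) (y : N.carrier s)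
    (H : TLe σ m (typ M hfM m s x) (typ N hfN m s y)) :
    TLe σ k (typ M hfM k s x) (typ N hfN k s y) := by
  obtain ⟨d, rfl⟩ := Nat.exists_eq_add_of_le hkm
  exact tle_down_add M N hfM hfN d k s x y H

theorem descend (hac : σ.Acyclic) (f : σ.F) (x : M.carrier (σ.tgt f)) (y : N.carrier (σ.tgt f))
    (hR : Rel M N hfM hfN (σ.tgt f) x y) :
    List.SublistForall₂ (Rel M N hfM hfN (σ.src f))
      (pre M hfM f (σ.tgt f) rfl x) (pre N hfN f (σ.tgt f) rfl y) := by
  have Hf := hR f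
  simp only [typ, dif_pos rfl, dite_true] at Hf
  rw [List.sublistForall₂_map_left_iff, List.sublistForall₂_map_right_iff] at Hf
  refine sfImp (fun a b hab => ?_) Hf
  exact tle_down_le M N hfM hfN (Nat.succ_le_of_lt (hS_lt hac ⟨f, rfl, rfl⟩)) (σ.src f) a b hab

end Pair

theorem sub_inj {α β : Type*} {r : α → β → Prop} :
    ∀ {l₁ : List α} {l₂ : List β}, List.SublistForall₂ r l₁ l₂ → l₁.Nodup → l₂.Nodup →
    ∃ φ : ∀ a, a ∈ l₁ → β, (∀ a ha, φ a ha ∈ l₂ ∧ r a (φ a ha)) ∧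
      ∀ a ha a' ha', φ a ha = φ a' ha' → a = a' := by
  intro l₁ l₂ h
  induction h with
  | nil =>
    intro _ _
    exact ⟨fun a ha => absurd ha List.not_mem_nil,
      fun a ha => absurd ha List.not_mem_nil,
      fun a ha => absurd ha List.not_mem_nil⟩
  | @cons a b l₁ l₂ hr hsub ih =>
    intro h₁ h₂
    obtain ⟨φ, hmem, hinj⟩ := ih h₁.of_cons h₂.of_cons
    have hbl₂ : b ∉ l₂ := (List.nodup_cons.1 h₂).1
    refine ⟨fun x hx => if h : x = a then b else φ x (by
      rcases List.mem_cons.1 hx with rfl | hx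
      · exact absurd rfl h
      · exact hx), ?_, ?_⟩
    · intro x hx
      by_cases h : x = a
      · simp only [dif_pos h]
        exact ⟨List.mem_cons_self, h.symm ▸ hr⟩
      · simp only [dif_neg h]
        exact ⟨List.mem_cons_of_mem _ (hmem _ _).1, (hmem _ _).2⟩
    · intro x hx x' hx' heq
      dsimp only at heq
      by_cases h : x = a <;> by_cases h' : x' = a
      · exact h.trans h'.symm
      · rw [dif_pos h, dif_neg h'] at heq
        exact absurd (heq ▸ (hmem _ _).1) hbl₂
      · rw [dif_neg h, dif_pos h'] at heq
        exact absurd (heq ▸ (hmem _ _).1) hbl₂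
      · rw [dif_neg h, dif_neg h'] at heq
        exact hinj _ _ _ _ heq
  | @cons_right b l₁ l₂ hsub ih =>
    intro h₁ h₂
    obtain ⟨φ, hmem, hinj⟩ := ih h₁ h₂.of_cons
    exact ⟨φ, fun a ha => ⟨List.mem_cons_of_mem _ (hmem a ha).1, (hmem a ha).2⟩, hinj⟩

section Build

variable [Fintype σ.S] (M N : UnarySig.Str.{u} σ) (hfM : ∀ s, Finite (M.carrier s))
  (hfN : ∀ s, Finite (N.carrier s))

structure PartEmb (s : σ.S) where
  g : M.carrier s → N.carrier s
  hR : ∀ x, Rel M N hfM hfN s x (g x)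
  inj : Function.Injective g

noncomputable def extend (hac : σ.Acyclic) (f : σ.F) (p : PartEmb M N hfM hfN (σ.tgt f)) :
    { q : PartEmb M N hfM hfN (σ.src f) // ∀ x, N.fI f (q.g x) = p.g (M.fI f x) } := by
  have Φ : ∀ y : M.carrier (σ.tgt f),
      ∃ φ : ∀ a, a ∈ pre M hfM f (σ.tgt f) rfl y → N.carrier (σ.src f),
      (∀ a ha, φ a ha ∈ pre N hfN f (σ.tgt f) rfl (p.g y) ∧
        Rel M N hfM hfN (σ.src f) a (φ a ha)) ∧
      ∀ a ha a' ha', φ a ha = φ a' ha' → a = a' := fun y =>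
    sub_inj (descend M N hfM hfN hac f y (p.g y) (p.hR y))
      (nodup_pre M hfM f _ rfl y) (nodup_pre N hfN f _ rfl (p.g y))
  choose φ hφ1 hφ2 using Φ
  have hcomm : ∀ x : M.carrier (σ.src f),
      N.fI f (φ (M.fI f x) x (mem_pre.2 rfl)) = p.g (M.fI f x) := fun x =>
    mem_pre.1 (hφ1 (M.fI f x) x (mem_pre.2 rfl)).1
  refine ⟨⟨fun x => φ (M.fI f x) x (mem_pre.2 rfl),
    fun x => (hφ1 (M.fI f x) x (mem_pre.2 rfl)).2, ?_⟩, hcomm⟩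
  intro x x' h
  dsimp only at h
  have key : ∀ (y y' : M.carrier (σ.tgt f)) (_ : y = y') (a : M.carrier (σ.src f))
      (p₁ : a ∈ pre M hfM f (σ.tgt f) rfl y) (p₂ : a ∈ pre M hfM f (σ.tgt f) rfl y'),
      φ y a p₁ = φ y' a p₂ := by
    rintro y _ rfl a p₁ p₂; rfl
  have hy : M.fI f x = M.fI f x' := by
    apply p.inj
    rw [← hcomm x, ← hcomm x', h]
  have h' : φ (M.fI f x) x (mem_pre.2 rfl) = φ (M.fI f x) x' (mem_pre.2 hy.symm) :=
    h.trans (key (M.fI f x') (M.fI f x) hy.symm x' (mem_pre.2 rfl) (mem_pre.2 hy.symm))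
  exact hφ2 (M.fI f x) x (mem_pre.2 rfl) x' (mem_pre.2 hy.symm) h'

noncomputable def extendAt (hac : σ.Acyclic) (f : σ.F) (s : σ.S) (hfs : σ.src f = s)
    (p : PartEmb M N hfM hfN (σ.tgt f)) :
    { q : PartEmb M N hfM hfN s //
      ∀ x : M.carrier (σ.src f),
        N.fI f (cast (congrArg N.carrier hfs.symm) (q.g (cast (congrArg M.carrier hfs) x))) =
          p.g (M.fI f x) } := by
  subst hfs
  exact extend M N hfM hfN hac f p

noncomputable def rootPart (s : σ.S)
    (H : List.SublistForall₂ (Rel M N hfM hfN s) (elems M hfM s) (elems N hfN s)) :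
    PartEmb M N hfM hfN s :=
  let E := sub_inj H (nodup_elems M hfM s) (nodup_elems N hfN s)
  { g := fun x => Classical.choose E x (mem_elems M hfM s x)
    hR := fun x => ((Classical.choose_spec E).1 x (mem_elems M hfM s x)).2
    inj := fun x x' h => (Classical.choose_spec E).2 x _ x' _ h }

variable (Hroot : ∀ s : σ.S, (∀ f : σ.F, σ.src f ≠ s) →
  List.SublistForall₂ (Rel M N hfM hfN s) (elems M hfM s) (elems N hfN s))

theorem wfDown (hac : σ.Acyclic) : WellFounded (fun t s : σ.S => σ.Step s t) := by
  haveI : IsIrrefl σ.S (Relation.TransGen (Function.swap σ.Step)) :=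
    ⟨fun a ha => hac a (Relation.transGen_swap.2 ha)⟩
  have wf := Finite.wellFounded_of_trans_of_irrefl (Relation.TransGen (Function.swap σ.Step))
  exact Subrelation.wf (r := Relation.TransGen (Function.swap σ.Step))
    (fun h => Relation.TransGen.single h) wf

noncomputable def Fstep (hac : σ.Acyclic) (s : σ.S)
    (ih : ∀ t, σ.Step s t → PartEmb M N hfM hfN t) : PartEmb M N hfM hfN s :=
  if hroot : ∀ f : σ.F, σ.src f ≠ s then rootPart M N hfM hfN s (Hroot s hroot)
  else
    (extendAt M N hfM hfN hac (Classical.choose (not_forall_not.mp hroot)) s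
      (Classical.choose_spec (not_forall_not.mp hroot))
      (ih _ ⟨_, Classical.choose_spec (not_forall_not.mp hroot), rfl⟩)).1

noncomputable def toFunAux (hac : σ.Acyclic) : ∀ s, PartEmb M N hfM hfN s :=
  (wfDown hac).fix (Fstep M N hfM hfN Hroot hac)

theorem toFunAux_eq (hac : σ.Acyclic) (s : σ.S) :
    toFunAux M N hfM hfN Hroot hac s =
      Fstep M N hfM hfN Hroot hac s (fun t _ => toFunAux M N hfM hfN Hroot hac t) :=
  WellFounded.fix_eq _ _ _

theorem toFunAux_comm' (htree : σ.TreeLike) (f : σ.F) (s : σ.S) (hfs : σ.src f = s)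
    (x : M.carrier (σ.src f)) :
    N.fI f (cast (congrArg N.carrier hfs.symm)
        ((toFunAux M N hfM hfN Hroot htree.1 s).g (cast (congrArg M.carrier hfs) x))) =
      (toFunAux M N hfM hfN Hroot htree.1 (σ.tgt f)).g (M.fI f x) := by
  have hnr : ¬∀ g : σ.F, σ.src g ≠ s := fun h => h f hfs
  rw [toFunAux_eq M N hfM hfN Hroot htree.1 s]
  simp only [Fstep]
  rw [dif_neg hnr]
  generalize_proofs hE hc hq h3 hac2 hspec h6
  have hf' : Classical.choose hc = f := htree.2.1 _ _ (hspec.trans hfs.symm)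
  revert hq h3 hspec
  rw [hf']
  intro hq h3 hspec
  exact (extendAt M N hfM hfN hac2 f s hspec
    (toFunAux M N hfM hfN Hroot hac2 (σ.tgt f))).2 x

theorem toFunAux_comm (htree : σ.TreeLike) (f : σ.F) (x : M.carrier (σ.src f)) :
    N.fI f ((toFunAux M N hfM hfN Hroot htree.1 (σ.src f)).g x) =
      (toFunAux M N hfM hfN Hroot htree.1 (σ.tgt f)).g (M.fI f x) :=
  toFunAux_comm' M N hfM hfN Hroot htree f (σ.src f) rfl x

include hfM hfN Hroot in
theorem emb_of_root (htree : σ.TreeLike) : Nonempty (UnarySig.Emb M N) :=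
  ⟨{ toFun := fun s => (toFunAux M N hfM hfN Hroot htree.1 s).g
     inj := fun s => (toFunAux M N hfM hfN Hroot htree.1 s).inj
     comm := fun f x => (toFunAux_comm M N hfM hfN Hroot htree f x).symm }⟩

end Build

end TWqo

/-- **Well-quasi-orderedness of finite structures over tree-like signatures.**
If `Σ̃` is a tree-like multi-sorted signature with only unary function symbols
and no constant symbols, then the finite `Σ̃`-structures form a
well-quasi-order with respect to embeddability: every infinite sequence of
finite structures contains `i < j` with `Mᵢ` embeddable into `Mⱼ`. -/
theorem finite_structures_wqo_of_treeLike (σ : UnarySig)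
    [Fintype σ.S] [Fintype σ.F] (htree : σ.TreeLike)
    (M : ℕ → UnarySig.Str.{u} σ) (hfin : ∀ (n : ℕ) (s : σ.S), Finite ((M n).carrier s)) :
    ∃ i j : ℕ, i < j ∧ Nonempty (UnarySig.Emb (M i) (M j)) := by
  classical
  obtain ⟨r, hr, hrun⟩ := htree.2.2
  set K := TWqo.hS σ r + 1 with hK
  have hlist : (Set.univ : Set (List (TWqo.TT σ K))).PartiallyWellOrderedOn
      (List.SublistForall₂ (TWqo.TLe σ K)) := by
    haveI : IsPreorder (TWqo.TT σ K) (TWqo.TLe σ K) := { refl := refl_of (TWqo.TLe σ K), trans := fun _ _ _ => trans_of (TWqo.TLe σ K) }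
    have h := (TWqo.TLe_pwo σ K).partiallyWellOrderedOn_sublistForall₂ (r := TWqo.TLe σ K)
    rw [Set.partiallyWellOrderedOn_iff_exists_lt] at h ⊢
    intro f hf
    exact h f (by simp)
  obtain ⟨i, j, hij, hsub⟩ := Set.partiallyWellOrderedOn_iff_exists_lt.1 hlist
    (fun n => (TWqo.elems (M n) (hfin n) r).map (TWqo.typ (M n) (hfin n) K r))
    (fun n => Set.mem_univ _)
  refine ⟨i, j, hij, ?_⟩
  apply TWqo.emb_of_root (M i) (M j) (hfin i) (hfin j) ?_ htree
  intro s hs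
  have hsr : s = r := hrun s hs
  subst hsr
  rw [List.sublistForall₂_map_left_iff, List.sublistForall₂_map_right_iff] at hsub
  exact hsub
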